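/- Fix x̌, x̂ ∈ ℝⁿ with x̌⁽ˡ⁾ ≤ x̂⁽ˡ⁾ for every l, and let g be the associated erf-product function. Then g is quasiconcave on ℝⁿ: for every c ∈ ℝ, the superlevel set {z ∈ ℝⁿ : g(z) ≥ c} is convex. -/

import Mathlib

open Real MeasureTheory Set Filter intervalIntegral Topology

/-- The Gauss error function `erf x = (2/√π) ∫₀ˣ exp (−t²) dt`. -/
noncomputable def erf (x : ℝ) : ℝ :=
  (2 / Real.sqrt Real.pi) * ∫ t in (0:ℝ)..x, Real.exp (-t ^ 2)

/-- The erf-product function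
`g z = 2⁻ⁿ ∏ₗ (erf((zₗ − x̌ₗ)/√2) − erf((zₗ − x̂ₗ)/√2))`. -/
noncomputable def gerf {n : ℕ} (xlo xhi : Fin n → ℝ) (z : Fin n → ℝ) : ℝ :=
  (1 / 2 : ℝ) ^ n *
    ∏ l, (erf ((z l - xlo l) / Real.sqrt 2) - erf ((z l - xhi l) / Real.sqrt 2))


namespace GerfAux

lemma contE : Continuous fun s : ℝ => exp (-s ^ 2) := by fun_prop

lemma integrableE : Integrable fun s : ℝ => exp (-s ^ 2) := by
  have := integrable_exp_neg_mul_sq (b := 1) one_pos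
  simpa using this

noncomputable def II (v u : ℝ) : ℝ := ∫ s in v..u, exp (-s ^ 2)

lemma hasDerivAt_II (v u : ℝ) : HasDerivAt (II v) (exp (-u ^ 2)) u :=
  (contE.integral_hasStrictDerivAt v u).hasDerivAt

lemma II_nonneg {v u : ℝ} (h : v ≤ u) : 0 ≤ II v u :=
  intervalIntegral.integral_nonneg h (fun s _ => (exp_pos _).le)

lemma II_mono (v : ℝ) : Monotone (II v) :=
  monotone_of_hasDerivAt_nonneg (hasDerivAt_II v) (fun _ => (exp_pos _).le)

lemma hasDerivAt_expsq (u : ℝ) :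
    HasDerivAt (fun u : ℝ => exp (-u ^ 2)) (-2 * u * exp (-u ^ 2)) u := by
  have h1 : HasDerivAt (fun u : ℝ => -u ^ 2) (-(2 * u)) u := by
    simpa using (hasDerivAt_pow 2 u).fun_neg
  have := h1.exp
  convert this using 1
  ring

noncomputable def G (v u : ℝ) : ℝ :=
  2 * u * exp (-v ^ 2) - u * exp (-u ^ 2) - v * exp (-v ^ 2) + (1 - 2 * u ^ 2) * II v u

noncomputable def F (v u : ℝ) : ℝ :=
  1 / 2 * (exp (-v ^ 2) - exp (-u ^ 2)) ^ 2 - (v * exp (-v ^ 2) - u * exp (-u ^ 2)) * II v u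

lemma hasDerivAt_G (v u : ℝ) :
    HasDerivAt (G v) (2 * exp (-v ^ 2) - 4 * u * II v u) u := by
  have hid : HasDerivAt (fun u : ℝ => u) 1 u := hasDerivAt_id u
  have hA : HasDerivAt (fun u : ℝ => 2 * u * exp (-v ^ 2)) (2 * exp (-v ^ 2)) u := by
    simpa [mul_assoc] using ((hid.const_mul 2).mul_const (exp (-v ^ 2)))
  have hB : HasDerivAt (fun u : ℝ => u * exp (-u ^ 2))
      (1 * exp (-u ^ 2) + u * (-2 * u * exp (-u ^ 2))) u := hid.mul (hasDerivAt_expsq u)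
  have hpoly : HasDerivAt (fun u : ℝ => 1 - 2 * u ^ 2) (-(2 * (2 * u))) u := by
    simpa using ((hasDerivAt_pow 2 u).const_mul 2).const_sub 1
  have hC : HasDerivAt (fun u : ℝ => (1 - 2 * u ^ 2) * II v u)
      (-(2 * (2 * u)) * II v u + (1 - 2 * u ^ 2) * exp (-u ^ 2)) u :=
    hpoly.mul (hasDerivAt_II v u)
  have := ((hA.fun_sub hB).sub_const (v * exp (-v ^ 2))).fun_add hC
  refine this.congr_deriv ?_
  ring

lemma hasDerivAt_F (v u : ℝ) :
    HasDerivAt (F v) (exp (-u ^ 2) * G v u) u := by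
  have hid : HasDerivAt (fun u : ℝ => u) 1 u := hasDerivAt_id u
  have hsq : HasDerivAt (fun u : ℝ => 1 / 2 * (exp (-v ^ 2) - exp (-u ^ 2)) ^ 2)
      (1 / 2 * (2 * (exp (-v ^ 2) - exp (-u ^ 2)) * (-(-2 * u * exp (-u ^ 2))))) u := by
    exact (((hasDerivAt_const u (exp (-v ^ 2))).fun_sub (hasDerivAt_expsq u)).pow 2).const_mul (1/2)
      |>.congr_deriv (by ring)
  have hprod : HasDerivAt (fun u : ℝ => (v * exp (-v ^ 2) - u * exp (-u ^ 2)) * II v u)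
      ((0 - (1 * exp (-u ^ 2) + u * (-2 * u * exp (-u ^ 2)))) * II v u
        + (v * exp (-v ^ 2) - u * exp (-u ^ 2)) * exp (-u ^ 2)) u :=
    (((hasDerivAt_const u (v * exp (-v ^ 2))).sub (hid.mul (hasDerivAt_expsq u)))).mul
      (hasDerivAt_II v u)
  have := hsq.fun_sub hprod
  refine this.congr_deriv ?_
  unfold G
  ring

lemma G_self (v : ℝ) : G v v = 0 := by
  unfold G II
  rw [intervalIntegral.integral_same]
  ring

lemma F_self (v : ℝ) : F v v = 0 := by
  unfold F II
  rw [intervalIntegral.integral_same]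
  ring

lemma G_propagate {v w : ℝ} (hvw : v < w) (hGw : G v w < 0) :
    ∀ x, w ≤ x → G v x < 0 := by
  intro x hwx
  rcases eq_or_lt_of_le hwx with rfl | hwx
  · exact hGw
  by_contra hcon
  push_neg at hcon
  -- MVT on [v, w]
  obtain ⟨ξ₁, hξ₁mem, hξ₁⟩ := exists_hasDerivAt_eq_slope (G v)
    (fun u => 2 * exp (-v ^ 2) - 4 * u * II v u) hvw
    (fun x _ => (hasDerivAt_G v x).differentiableAt.continuousAt.continuousWithinAt)
    (fun x _ => hasDerivAt_G v x)
  obtain ⟨ξ₂, hξ₂mem, hξ₂⟩ := exists_hasDerivAt_eq_slope (G v)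
    (fun u => 2 * exp (-v ^ 2) - 4 * u * II v u) hwx
    (fun x _ => (hasDerivAt_G v x).differentiableAt.continuousAt.continuousWithinAt)
    (fun x _ => hasDerivAt_G v x)
  have hs1 : 2 * exp (-v ^ 2) - 4 * ξ₁ * II v ξ₁ < 0 := by
    rw [hξ₁, G_self, sub_zero]
    exact div_neg_of_neg_of_pos hGw (by linarith)
  have hs2 : 0 < 2 * exp (-v ^ 2) - 4 * ξ₂ * II v ξ₂ := by
    rw [hξ₂]
    apply div_pos <;> linarith
  have hI₁ : 0 ≤ II v ξ₁ := II_nonneg hξ₁mem.1.le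
  have hξ₁pos : 0 < ξ₁ := by
    by_contra hle
    push_neg at hle
    have : 4 * ξ₁ * II v ξ₁ ≤ 0 :=
      mul_nonpos_of_nonpos_of_nonneg (by linarith) hI₁
    have := exp_pos (-v ^ 2)
    linarith
  have hI₂ : II v ξ₁ ≤ II v ξ₂ := II_mono v (by linarith [hξ₁mem.2, hξ₂mem.1])
  have : 4 * ξ₁ * II v ξ₁ ≤ 4 * ξ₂ * II v ξ₂ := by
    have h1 : ξ₁ ≤ ξ₂ := by linarith [hξ₁mem.2, hξ₂mem.1]
    nlinarith
  linarith

lemma tendsto_expsq : Tendsto (fun u : ℝ => exp (-u ^ 2)) atTop (𝓝 0) := by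
  have h1 : Tendsto (fun u : ℝ => u ^ 2) atTop atTop := tendsto_pow_atTop two_ne_zero
  exact tendsto_exp_neg_atTop_nhds_zero.comp h1

lemma tendsto_id_mul_expsq : Tendsto (fun u : ℝ => u * exp (-u ^ 2)) atTop (𝓝 0) := by
  have hb : Tendsto (fun u : ℝ => u * exp (-u)) atTop (𝓝 0) := by
    simpa using Real.tendsto_pow_mul_exp_neg_atTop_nhds_zero 1
  apply squeeze_zero' (g := fun u : ℝ => u * exp (-u))
  · filter_upwards [eventually_ge_atTop (0:ℝ)] with u hu
    positivity
  · filter_upwards [eventually_ge_atTop (1:ℝ)] with u hu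
    have : u ≤ u ^ 2 := by nlinarith
    have := exp_le_exp.2 (neg_le_neg this)
    nlinarith [exp_pos (-u ^ 2), exp_pos (-u)]
  · exact hb

lemma tendsto_II (v : ℝ) :
    Tendsto (II v) atTop (𝓝 (∫ s in Ioi v, exp (-s ^ 2))) :=
  intervalIntegral_tendsto_integral_Ioi v integrableE.integrableOn tendsto_id

lemma integral_Ioi_mul_expsq (v : ℝ) :
    ∫ s in Ioi v, s * exp (-s ^ 2) = 1 / 2 * exp (-v ^ 2) := by
  have hderiv : ∀ x ∈ Ici v, HasDerivAt (fun s : ℝ => -(1 / 2) * exp (-s ^ 2))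
      (x * exp (-x ^ 2)) x := by
    intro x _
    have := (hasDerivAt_expsq x).const_mul (-(1/2) : ℝ)
    exact this.congr_deriv (by ring)
  have hint : IntegrableOn (fun s : ℝ => s * exp (-s ^ 2)) (Ioi v) := by
    have := integrable_mul_exp_neg_mul_sq (b := 1) one_pos
    simp only [neg_mul, one_mul] at this
    exact this.integrableOn
  have htend : Tendsto (fun s : ℝ => -(1 / 2) * exp (-s ^ 2)) atTop (𝓝 0) := by
    have := tendsto_expsq.const_mul (-(1/2) : ℝ)
    simpa using this
  have := integral_Ioi_of_hasDerivAt_of_tendsto' (f := fun s : ℝ => -(1 / 2) * exp (-s ^ 2))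
    (f' := fun s : ℝ => s * exp (-s ^ 2)) (a := v) hderiv hint htend
  rw [this]
  ring

lemma L_nonneg (v : ℝ) :
    v * exp (-v ^ 2) * ∫ s in Ioi v, exp (-s ^ 2) ≤ 1 / 2 * (exp (-v ^ 2)) ^ 2 := by
  rcases le_or_gt v 0 with hv | hv
  · have h1 : (0:ℝ) ≤ ∫ s in Ioi v, exp (-s ^ 2) :=
      setIntegral_nonneg measurableSet_Ioi (fun s _ => (exp_pos _).le)
    have h2 : v * exp (-v ^ 2) ≤ 0 :=
      mul_nonpos_of_nonpos_of_nonneg hv (exp_pos _).le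
    nlinarith [sq_nonneg (exp (-v ^ 2))]
  · have hmono : ∫ s in Ioi v, exp (-s ^ 2) ≤ ∫ s in Ioi v, 1 / v * (s * exp (-s ^ 2)) := by
      apply setIntegral_mono_on integrableE.integrableOn _ measurableSet_Ioi
      · intro s hs
        have hs' : v ≤ s := (mem_Ioi.mp hs).le
        have h1 : 1 ≤ s / v := (one_le_div hv).mpr hs'
        rw [div_eq_mul_inv] at h1
        calc exp (-s ^ 2) = 1 * exp (-s ^ 2) := (one_mul _).symm
          _ ≤ s * v⁻¹ * exp (-s ^ 2) := mul_le_mul_of_nonneg_right h1 (exp_pos _).le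
          _ = 1 / v * (s * exp (-s ^ 2)) := by ring
      · have := integrable_mul_exp_neg_mul_sq (b := 1) one_pos
        simp only [neg_mul, one_mul] at this
        exact (this.const_mul (1 / v)).integrableOn
    rw [MeasureTheory.integral_const_mul, integral_Ioi_mul_expsq] at hmono
    have h3 : 0 ≤ v * exp (-v ^ 2) := by positivity
    calc v * exp (-v ^ 2) * ∫ s in Ioi v, exp (-s ^ 2)
        ≤ v * exp (-v ^ 2) * (1 / v * (1 / 2 * exp (-v ^ 2))) :=
          mul_le_mul_of_nonneg_left hmono h3
      _ = 1 / 2 * (exp (-v ^ 2)) ^ 2 := by field_simp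


lemma tendsto_F (v : ℝ) :
    Tendsto (F v) atTop
      (𝓝 (1 / 2 * (exp (-v ^ 2)) ^ 2 - v * exp (-v ^ 2) * ∫ s in Ioi v, exp (-s ^ 2))) := by
  have h1 : Tendsto (fun u : ℝ => 1 / 2 * (exp (-v ^ 2) - exp (-u ^ 2)) ^ 2) atTop
      (𝓝 (1 / 2 * (exp (-v ^ 2) - 0) ^ 2)) :=
    (((tendsto_const_nhds.sub tendsto_expsq).pow 2).const_mul (1/2))
  have h2 : Tendsto (fun u : ℝ => (v * exp (-v ^ 2) - u * exp (-u ^ 2)) * II v u) atTop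
      (𝓝 ((v * exp (-v ^ 2) - 0) * ∫ s in Ioi v, exp (-s ^ 2))) :=
    ((tendsto_const_nhds.sub tendsto_id_mul_expsq).mul (tendsto_II v))
  have := h1.sub h2
  simp only [sub_zero] at this
  exact this

lemma key {v u : ℝ} (h : v ≤ u) :
    (v * exp (-v ^ 2) - u * exp (-u ^ 2)) * II v u
      ≤ 1 / 2 * (exp (-v ^ 2) - exp (-u ^ 2)) ^ 2 := by
  have hF : 0 ≤ F v u := by
    by_cases hcase : ∀ x ∈ Icc v u, 0 ≤ G v x
    · have hmono : MonotoneOn (F v) (Icc v u) := by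
        apply monotoneOn_of_hasDerivWithinAt_nonneg (convex_Icc v u)
          (f' := fun x => exp (-x ^ 2) * G v x)
        · exact fun x _ => (hasDerivAt_F v x).differentiableAt.continuousAt.continuousWithinAt
        · exact fun x _ => (hasDerivAt_F v x).hasDerivWithinAt
        · intro x hx
          rw [interior_Icc] at hx
          exact mul_nonneg (exp_pos _).le (hcase x ⟨hx.1.le, hx.2.le⟩)
      have := hmono ⟨le_refl v, h⟩ ⟨h, le_refl u⟩ h
      rwa [F_self] at this
    · push_neg at hcase
      obtain ⟨w, hwmem, hGw⟩ := hcase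
      have hvw : v < w := by
        rcases eq_or_lt_of_le hwmem.1 with rfl | hlt
        · rw [G_self] at hGw; linarith
        · exact hlt
      have hGle : ∀ x, w ≤ x → G v x < 0 := G_propagate hvw hGw
      have hanti : AntitoneOn (F v) (Ici w) := by
        apply antitoneOn_of_hasDerivWithinAt_nonpos (convex_Ici w)
          (f' := fun x => exp (-x ^ 2) * G v x)
        · exact fun x _ => (hasDerivAt_F v x).differentiableAt.continuousAt.continuousWithinAt
        · exact fun x _ => (hasDerivAt_F v x).hasDerivWithinAt
        · intro x hx
          rw [interior_Ici] at hx
          exact mul_nonpos_of_nonneg_of_nonpos (exp_pos _).le (hGle x (le_of_lt hx)).le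
      have hwu : w ≤ u := hwmem.2
      have hFuL : 1 / 2 * (exp (-v ^ 2)) ^ 2 - v * exp (-v ^ 2) * (∫ s in Ioi v, exp (-s ^ 2))
          ≤ F v u := by
        apply le_of_tendsto (tendsto_F v)
        filter_upwards [eventually_ge_atTop u] with x hx
        exact hanti (mem_Ici.mpr hwu) (mem_Ici.mpr (hwu.trans hx)) hx
      have := L_nonneg v
      linarith
  unfold F at hF
  linarith


lemma erf_hasDerivAt (x : ℝ) :
    HasDerivAt _root_.erf (2 / Real.sqrt π * exp (-x ^ 2)) x := by
  unfold _root_.erf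
  exact ((contE.integral_hasStrictDerivAt 0 x).hasDerivAt).const_mul _

lemma erf_sub_erf (a b : ℝ) :
    _root_.erf b - _root_.erf a = 2 / Real.sqrt π * II a b := by
  unfold _root_.erf II
  rw [← intervalIntegral.integral_add_adjacent_intervals (a := (0:ℝ)) (b := a) (c := b)
    (contE.intervalIntegrable 0 a) (contE.intervalIntegrable a b)]
  ring

noncomputable def hfun (a b t : ℝ) : ℝ :=
  _root_.erf ((t - a) / Real.sqrt 2) - _root_.erf ((t - b) / Real.sqrt 2)

lemma sqrt2_pos : 0 < Real.sqrt 2 := Real.sqrt_pos.mpr two_pos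

lemma hfun_eq (a b t : ℝ) :
    hfun a b t = 2 / Real.sqrt π * II ((t - b) / Real.sqrt 2) ((t - a) / Real.sqrt 2) :=
  erf_sub_erf _ _

lemma hfun_pos {a b : ℝ} (hab : a < b) (t : ℝ) : 0 < hfun a b t := by
  rw [hfun_eq]
  apply mul_pos (div_pos two_pos (Real.sqrt_pos.mpr pi_pos))
  unfold II
  apply intervalIntegral.intervalIntegral_pos_of_pos_on (contE.intervalIntegrable _ _)
    (fun s _ => exp_pos _)
  have h2 := sqrt2_pos
  rw [div_lt_div_iff₀ h2 h2]
  nlinarith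

noncomputable def h1 (a b t : ℝ) : ℝ :=
  2 / Real.sqrt π * exp (-((t - a) / Real.sqrt 2) ^ 2) * (1 / Real.sqrt 2)
    - 2 / Real.sqrt π * exp (-((t - b) / Real.sqrt 2) ^ 2) * (1 / Real.sqrt 2)

noncomputable def h2fun (a b t : ℝ) : ℝ :=
  2 / Real.sqrt π * ((t - b) / Real.sqrt 2 * exp (-((t - b) / Real.sqrt 2) ^ 2))
    - 2 / Real.sqrt π * ((t - a) / Real.sqrt 2 * exp (-((t - a) / Real.sqrt 2) ^ 2))

lemma inner_hasDerivAt (a t : ℝ) :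
    HasDerivAt (fun t : ℝ => (t - a) / Real.sqrt 2) (1 / Real.sqrt 2) t :=
  ((hasDerivAt_id t).sub_const a).div_const (Real.sqrt 2)

lemma hfun_hasDerivAt (a b t : ℝ) : HasDerivAt (hfun a b) (h1 a b t) t := by
  have ha := (erf_hasDerivAt ((t - a) / Real.sqrt 2)).comp t (inner_hasDerivAt a t)
  have hb := (erf_hasDerivAt ((t - b) / Real.sqrt 2)).comp t (inner_hasDerivAt b t)
  exact ha.sub hb

lemma h1_hasDerivAt (a b t : ℝ) : HasDerivAt (h1 a b) (h2fun a b t) t := by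
  have Ea := (hasDerivAt_expsq ((t - a) / Real.sqrt 2)).comp t (inner_hasDerivAt a t)
  have Eb := (hasDerivAt_expsq ((t - b) / Real.sqrt 2)).comp t (inner_hasDerivAt b t)
  have ha := (Ea.const_mul (2 / Real.sqrt π)).mul_const (1 / Real.sqrt 2)
  have hb := (Eb.const_mul (2 / Real.sqrt π)).mul_const (1 / Real.sqrt 2)
  have := ha.fun_sub hb
  refine this.congr_deriv ?_
  have hs : (1 / Real.sqrt 2 : ℝ) * (1 / Real.sqrt 2) = 1 / 2 := by
    rw [div_mul_div_comm, one_mul, Real.mul_self_sqrt two_pos.le]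
  unfold h2fun
  field_simp
  simp only [Real.sq_sqrt (two_pos.le : (0:ℝ) ≤ 2)]
  ring

lemma h_key {a b : ℝ} (hab : a ≤ b) (t : ℝ) :
    h2fun a b t * hfun a b t ≤ h1 a b t ^ 2 := by
  set c : ℝ := 2 / Real.sqrt π with hc
  set u : ℝ := (t - a) / Real.sqrt 2 with hu
  set v : ℝ := (t - b) / Real.sqrt 2 with hv
  have huv : v ≤ u := by
    rw [hu, hv, div_le_div_iff₀ sqrt2_pos sqrt2_pos]
    nlinarith [sqrt2_pos]
  have hk := key huv
  have hsq : (1 / Real.sqrt 2 : ℝ) ^ 2 = 1 / 2 := by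
    rw [div_pow, one_pow, Real.sq_sqrt two_pos.le]
  calc h2fun a b t * hfun a b t
      = c ^ 2 * ((v * exp (-v ^ 2) - u * exp (-u ^ 2)) * II v u) := by
        rw [hfun_eq]; unfold h2fun; rw [← hc, ← hu, ← hv]; ring
    _ ≤ c ^ 2 * (1 / 2 * (exp (-v ^ 2) - exp (-u ^ 2)) ^ 2) :=
        mul_le_mul_of_nonneg_left hk (sq_nonneg c)
    _ = h1 a b t ^ 2 := by
        unfold h1; rw [← hc, ← hu, ← hv]
        linear_combination (-(c ^ 2) * (exp (-u ^ 2) - exp (-v ^ 2)) ^ 2) * hsq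

noncomputable def flog (a b t : ℝ) : ℝ := Real.log (hfun a b t)

lemma flog_concave {a b : ℝ} (hab : a < b) : ConcaveOn ℝ univ (flog a b) := by
  have hpos := hfun_pos hab
  have hd1 : ∀ t, HasDerivAt (flog a b) (h1 a b t / hfun a b t) t :=
    fun t => (hfun_hasDerivAt a b t).log (hpos t).ne'
  have hd2 : ∀ t, HasDerivAt (fun t => h1 a b t / hfun a b t)
      ((h2fun a b t * hfun a b t - h1 a b t * h1 a b t) / hfun a b t ^ 2) t :=
    fun t => (h1_hasDerivAt a b t).div (hfun_hasDerivAt a b t) (hpos t).ne'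
  have hq2 : ∀ t, (h2fun a b t * hfun a b t - h1 a b t * h1 a b t) / hfun a b t ^ 2 ≤ 0 := by
    intro t
    apply div_nonpos_of_nonpos_of_nonneg _ (sq_nonneg _)
    nlinarith [h_key hab.le t]
  have hanti : Antitone (fun t => h1 a b t / hfun a b t) :=
    antitone_of_hasDerivAt_nonpos hd2 hq2
  apply Antitone.concaveOn_univ_of_deriv (fun t => (hd1 t).differentiableAt)
  have hder : deriv (flog a b) = fun t => h1 a b t / hfun a b t :=
    funext fun t => (hd1 t).deriv
  rw [hder]
  exact hanti

end GerfAux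

open GerfAux

/-- the erf-product function `g` is quasiconcave on `ℝⁿ`: all of its
superlevel sets are convex. -/
theorem gerf_quasiconcave
    {n : ℕ} (xlo xhi : Fin n → ℝ) (hx : ∀ l, xlo l ≤ xhi l) :
    ∀ c : ℝ, Convex ℝ {z : Fin n → ℝ | c ≤ gerf xlo xhi z} := by
  intro c
  by_cases hdeg : ∀ l, xlo l < xhi l
  · have hfactor : ∀ (z : Fin n → ℝ) (l : Fin n),
        erf ((z l - xlo l) / Real.sqrt 2) - erf ((z l - xhi l) / Real.sqrt 2)
          = hfun (xlo l) (xhi l) (z l) := fun z l => rfl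
    have hprodpos : ∀ z : Fin n → ℝ,
        0 < ∏ l, (erf ((z l - xlo l) / Real.sqrt 2) - erf ((z l - xhi l) / Real.sqrt 2)) := by
      intro z
      exact Finset.prod_pos fun l _ => hfun_pos (hdeg l) (z l)
    have hpos : ∀ z : Fin n → ℝ, 0 < gerf xlo xhi z := by
      intro z
      unfold gerf
      exact mul_pos (by positivity) (hprodpos z)
    rcases le_or_gt c 0 with hc | hc
    · have : {z : Fin n → ℝ | c ≤ gerf xlo xhi z} = univ :=
        eq_univ_of_forall fun z => le_trans hc (hpos z).le
      rw [this]; exact convex_univ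
    · have hset : {z : Fin n → ℝ | c ≤ gerf xlo xhi z}
          = {z : Fin n → ℝ | Real.log c
              ≤ Real.log ((1 / 2 : ℝ) ^ n) + ∑ l, flog (xlo l) (xhi l) (z l)} := by
        ext z
        simp only [mem_setOf_eq]
        rw [← Real.log_le_log_iff hc (hpos z)]
        unfold gerf
        simp only [hfactor]
        rw [Real.log_mul (by positivity)
            (Finset.prod_pos fun l _ => hfun_pos (hdeg l) (z l)).ne',
          Real.log_prod (fun l _ => (hfun_pos (hdeg l) (z l)).ne')]
        rfl
      rw [hset]
      intro z hz w hw p q hp hq hpq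
      simp only [mem_setOf_eq] at hz hw ⊢
      have hmid : ∀ l, p * flog (xlo l) (xhi l) (z l) + q * flog (xlo l) (xhi l) (w l)
          ≤ flog (xlo l) (xhi l) ((p • z + q • w) l) := by
        intro l
        have := (flog_concave (hdeg l)).2 (mem_univ (z l)) (mem_univ (w l)) hp hq hpq
        simpa [smul_eq_mul] using this
      have hsum : ∑ l, (p * flog (xlo l) (xhi l) (z l) + q * flog (xlo l) (xhi l) (w l))
          ≤ ∑ l, flog (xlo l) (xhi l) ((p • z + q • w) l) :=
        Finset.sum_le_sum fun l _ => hmid l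
      rw [Finset.sum_add_distrib, ← Finset.mul_sum, ← Finset.mul_sum] at hsum
      have h1 := mul_le_mul_of_nonneg_left hz hp
      have h2 := mul_le_mul_of_nonneg_left hw hq
      rw [mul_add] at h1 h2
      have hA : p * Real.log ((1 / 2 : ℝ) ^ n) + q * Real.log ((1 / 2 : ℝ) ^ n)
          = Real.log ((1 / 2 : ℝ) ^ n) := by rw [← add_mul, hpq, one_mul]
      have hlc : p * Real.log c + q * Real.log c = Real.log c := by
        rw [← add_mul, hpq, one_mul]
      linarith
  · push_neg at hdeg
    obtain ⟨l₀, hl₀⟩ := hdeg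
    have hEq : ∀ z : Fin n → ℝ, gerf xlo xhi z = 0 := by
      intro z
      unfold gerf
      apply mul_eq_zero_of_right
      apply Finset.prod_eq_zero (Finset.mem_univ l₀)
      have : xlo l₀ = xhi l₀ := le_antisymm (hx l₀) hl₀
      rw [this, sub_self]
    rcases le_or_gt c 0 with hc | hc
    · have : {z : Fin n → ℝ | c ≤ gerf xlo xhi z} = univ :=
        eq_univ_of_forall fun z => by rw [mem_setOf_eq, hEq z]; exact hc
      rw [this]; exact convex_univ
    · have : {z : Fin n → ℝ | c ≤ gerf xlo xhi z} = ∅ :=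
        eq_empty_iff_forall_notMem.mpr fun z hzz => by
          rw [mem_setOf_eq, hEq z] at hzz; linarith
      rw [this]; exact convex_empty
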